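/- arXiv:2405.13885 — 3 statements merged into one kernel-verified Lean document; each statement's English description precedes it below -/
import Mathlib

section
/- If μ is a Hermitian M×M complex matrix (the dipole operator), then for any eigenbasis index n₀ ∈ {0,…,M−1} and any real ω, the broadened dipole auto-correlation function is a nonnegatively weighted combination of window functions centered at the transition energies: Σ_{t=0}^{N−1} (α_t/√N) e^{−iωt} ⟨λ_{n₀}| e^{iHt} μ e^{−iHt} μ |λ_{n₀}⟩ = Σ_{n₁=0}^{M−1} |μ_{n₁ n₀}|² · L(λ_{n₀} − λ_{n₁} − ω). -/
open Matrix Complex BigOperators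

/-- The window (line shape) function `L(ω) = (1/√N) Σ_{k<N} α_k e^{ikω}`. -/
noncomputable def windowL (N : ℕ) (α : Fin N → ℂ) (ω : ℝ) : ℂ :=
  (1 / (Real.sqrt N : ℂ)) *
    ∑ k : Fin N, α k * Complex.exp (Complex.I * ((k : ℕ) : ℂ) * (ω : ℂ))

/-- The time-evolution operator `e^{iHs}` as a matrix exponential. -/
noncomputable def timeEvo {M : ℕ} (H : Matrix (Fin M) (Fin M) ℂ) (s : ℝ) :
    Matrix (Fin M) (Fin M) ℂ :=
  NormedSpace.exp (((s : ℂ) * Complex.I) • H)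

/-- Matrix element `V_{mn} = ⟨λ_m|V|λ_n⟩` in the eigenbasis `v`. -/
noncomputable def matElem {M : ℕ} (v : Fin M → Fin M → ℂ)
    (V : Matrix (Fin M) (Fin M) ℂ) (m n : Fin M) : ℂ :=
  star (v m) ⬝ᵥ (V *ᵥ v n)

section Aux

attribute [local instance] Matrix.linftyOpNormedRing Matrix.linftyOpNormedAlgebra

/-- The matrix exponential applied to an eigenvector. -/
lemma exp_mulVec_eig {m : ℕ} (A : Matrix (Fin m) (Fin m) ℂ) (x : Fin m → ℂ) (c : ℂ)
    (h : A *ᵥ x = c • x) : NormedSpace.exp A *ᵥ x = Complex.exp c • x := by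
  have hpow : ∀ n : ℕ, A ^ n *ᵥ x = c ^ n • x := by
    intro n
    induction n with
    | zero => simp
    | succ n ih =>
      rw [pow_succ, ← Matrix.mulVec_mulVec, h, Matrix.mulVec_smul, ih, smul_smul,
        mul_comm, ← pow_succ]
  have hL : ∃ L : Matrix (Fin m) (Fin m) ℂ →L[ℂ] (Fin m → ℂ), ∀ B, L B = B *ᵥ x := by
    refine ⟨LinearMap.toContinuousLinearMap
      { toFun := fun B => B *ᵥ x
        map_add' := fun B C => Matrix.add_mulVec B C x
        map_smul' := fun r B => Matrix.smul_mulVec r B x }, fun B => rfl⟩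
  obtain ⟨L, hLB⟩ := hL
  have hsum : Summable fun n : ℕ => (n.factorial : ℂ)⁻¹ • A ^ n :=
    NormedSpace.expSeries_summable' (𝕂 := ℂ) A
  have := L.map_tsum hsum
  rw [NormedSpace.exp_eq_tsum (𝕂 := ℂ), ← hLB, this]
  have : ∀ n : ℕ, L ((n.factorial : ℂ)⁻¹ • A ^ n) = ((n.factorial : ℂ)⁻¹ * c ^ n) • x := by
    intro n
    rw [_root_.map_smul, hLB, hpow, smul_smul]
  rw [tsum_congr this]
  rw [Summable.tsum_smul_const, Complex.exp_eq_exp_ℂ, NormedSpace.exp_eq_tsum (𝕂 := ℂ)]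
  · norm_num [smul_eq_mul]
  · simpa [smul_eq_mul] using NormedSpace.expSeries_summable' (𝕂 := ℂ) c

end Aux

/-- Completeness of an orthonormal family of `M` vectors in `ℂ^M`. -/
lemma onb_complete {M : ℕ} (v : Fin M → Fin M → ℂ)
    (hortho : ∀ m n, star (v m) ⬝ᵥ v n = if m = n then (1 : ℂ) else 0)
    (w : Fin M → ℂ) : ∑ n : Fin M, (star (v n) ⬝ᵥ w) • v n = w := by
  set U : Matrix (Fin M) (Fin M) ℂ := Matrix.of v with hU
  have h1 : U * Uᴴ = 1 := by
    ext a b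
    have := hortho b a
    simp only [dotProduct, Pi.star_apply] at this
    simp only [Matrix.mul_apply, Matrix.conjTranspose_apply, Matrix.of_apply, hU,
      Matrix.one_apply]
    have hc : ∑ x : Fin M, v a x * star (v b x) = ∑ x : Fin M, star (v b x) * v a x :=
      Finset.sum_congr rfl fun x _ => mul_comm _ _
    rw [hc, this]
    by_cases h : a = b <;> simp [h, eq_comm]
  have h2 : Uᴴ * U = 1 := mul_eq_one_comm.mp h1
  have h3 : ∀ i j : Fin M, ∑ n : Fin M, star (v n j) * v n i =
      if j = i then (1 : ℂ) else 0 := by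
    intro i j
    have := congrFun (congrFun h2 j) i
    simpa [Matrix.mul_apply, Matrix.conjTranspose_apply, Matrix.one_apply, hU] using this
  funext i
  simp only [Finset.sum_apply, Pi.smul_apply, smul_eq_mul, dotProduct, Pi.star_apply]
  calc ∑ n : Fin M, (∑ j : Fin M, star (v n j) * w j) * v n i
      = ∑ n : Fin M, ∑ j : Fin M, star (v n j) * v n i * w j := by
        refine Finset.sum_congr rfl fun n _ => ?_
        rw [Finset.sum_mul]
        exact Finset.sum_congr rfl fun j _ => by ring
    _ = ∑ j : Fin M, ∑ n : Fin M, star (v n j) * v n i * w j := Finset.sum_comm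
    _ = ∑ j : Fin M, (∑ n : Fin M, star (v n j) * v n i) * w j := by
        simp [Finset.sum_mul]
    _ = w i := by
        simp only [h3]
        simp
/-- Broadened linear absorption spectrum in the dipole approximation: for a Hermitian
dipole operator `μ`, the broadened dipole auto-correlation is a nonnegatively weighted
combination of window functions centered at the transition energies,
`Σ_t (α_t/√N) e^{-iωt} ⟨λ_{n₀}|e^{iHt} μ e^{-iHt} μ|λ_{n₀}⟩
  = Σ_{n₁} |μ_{n₁n₀}|² L(λ_{n₀} - λ_{n₁} - ω)`. -/
theorem broadened_dipole_autocorrelation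
    (M N : ℕ) (hN : 1 ≤ N)
    (H : Matrix (Fin M) (Fin M) ℂ) (hH : H.IsHermitian)
    (v : Fin M → Fin M → ℂ) (lam : Fin M → ℝ)
    (hortho : ∀ m n, star (v m) ⬝ᵥ v n = if m = n then (1 : ℂ) else 0)
    (heig : ∀ n, H *ᵥ v n = (lam n : ℂ) • v n)
    (μ : Matrix (Fin M) (Fin M) ℂ) (hμ : μ.IsHermitian)
    (α : Fin N → ℂ) (n₀ : Fin M) (ω : ℝ) :
    (∑ t : Fin N, (α t / (Real.sqrt N : ℂ)) *
        Complex.exp (-(Complex.I * (ω : ℂ) * ((t : ℕ) : ℂ))) *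
        (star (v n₀) ⬝ᵥ
          ((timeEvo H ((t : ℕ) : ℝ) * μ * timeEvo H (-((t : ℕ) : ℝ)) * μ) *ᵥ v n₀)))
      = ∑ n₁ : Fin M,
          ((‖matElem v μ n₁ n₀‖ ^ 2 : ℝ) : ℂ) *
            windowL N α (lam n₀ - lam n₁ - ω) := by
  -- eigenvector action of the time-evolution operator
  have hevo : ∀ (s : ℝ) (n : Fin M),
      timeEvo H s *ᵥ v n = Complex.exp ((s : ℂ) * Complex.I * (lam n : ℂ)) • v n := by
    intro s n
    apply exp_mulVec_eig
    rw [Matrix.smul_mulVec, heig n, smul_smul]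
  -- adjoint of the time evolution
  have hadj : ∀ s : ℝ, (timeEvo H s)ᴴ = timeEvo H (-s) := by
    intro s
    rw [timeEvo, ← Matrix.exp_conjTranspose, timeEvo]
    congr 1
    rw [Matrix.conjTranspose_smul, hH.eq]
    congr 1
    simp [Complex.conj_ofReal]
  -- pulling the time evolution onto the bra
  have hbra : ∀ (s : ℝ) (u : Fin M → ℂ),
      star (v n₀) ⬝ᵥ (timeEvo H s *ᵥ u) =
        Complex.exp ((s : ℂ) * Complex.I * (lam n₀ : ℂ)) * (star (v n₀) ⬝ᵥ u) := by
    intro s u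
    have hvm : star (v n₀) ᵥ* timeEvo H s = star (timeEvo H (-s) *ᵥ v n₀) := by
      rw [Matrix.star_mulVec, hadj, neg_neg]
    rw [Matrix.dotProduct_mulVec, hvm, hevo, star_smul, smul_dotProduct,
      smul_eq_mul]
    congr 2
    rw [RCLike.star_def, ← Complex.exp_conj]
    congr 1
    simp [Complex.conj_ofReal]
  -- hermiticity of μ in matrix elements
  have hent : ∀ i j, star (μ i j) = μ j i := by
    intro i j
    have := congrFun (congrFun hμ.eq j) i
    simpa [Matrix.conjTranspose_apply] using this
  have hsym : ∀ n₁ : Fin M,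
      star (v n₀) ⬝ᵥ (μ *ᵥ v n₁) = star (matElem v μ n₁ n₀) := by
    intro n₁
    simp only [matElem, dotProduct, Matrix.mulVec, dotProduct, Pi.star_apply,
      star_sum, star_mul', star_star]
    simp only [Finset.mul_sum]
    rw [Finset.sum_comm]
    refine Finset.sum_congr rfl fun a _ => Finset.sum_congr rfl fun b _ => ?_
    rw [hent a b]
    ring
  -- expansion of μ |v n₀⟩ in the eigenbasis
  have hmu0 : μ *ᵥ v n₀ = ∑ n₁ : Fin M, matElem v μ n₁ n₀ • v n₁ :=
    (onb_complete v hortho (μ *ᵥ v n₀)).symm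
  -- the correlation function for each time t
  have hterm : ∀ t : Fin N,
      star (v n₀) ⬝ᵥ
          ((timeEvo H ((t : ℕ) : ℝ) * μ * timeEvo H (-((t : ℕ) : ℝ)) * μ) *ᵥ v n₀)
        = ∑ n₁ : Fin M,
            Complex.exp ((((t : ℕ) : ℝ) : ℂ) * Complex.I * (lam n₀ : ℂ)) *
              (Complex.exp (((-((t : ℕ) : ℝ) : ℝ) : ℂ) * Complex.I * (lam n₁ : ℂ)) *
                (matElem v μ n₁ n₀ * star (matElem v μ n₁ n₀))) := by
    intro t
    have hms : ∀ (A : Matrix (Fin M) (Fin M) ℂ) (f : Fin M → Fin M → ℂ),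
        A *ᵥ (∑ i : Fin M, f i) = ∑ i : Fin M, A *ᵥ f i := fun A f => by
      simp only [← Matrix.mulVecLin_apply, map_sum]
    have hds : ∀ (x : Fin M → ℂ) (f : Fin M → Fin M → ℂ),
        x ⬝ᵥ (∑ i : Fin M, f i) = ∑ i : Fin M, x ⬝ᵥ f i := by
      intro x f
      simp only [dotProduct, Finset.sum_apply, Finset.mul_sum]
      exact Finset.sum_comm
    rw [← Matrix.mulVec_mulVec, ← Matrix.mulVec_mulVec, ← Matrix.mulVec_mulVec, hbra]
    rw [hmu0, hms]
    simp only [Matrix.mulVec_smul, hevo, smul_smul]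
    rw [hms, hds]
    simp only [Matrix.mulVec_smul, dotProduct_smul, smul_eq_mul, hsym, Finset.mul_sum]
    refine Finset.sum_congr rfl fun n₁ _ => ?_
    ring
  -- put everything together
  rw [Finset.sum_congr rfl fun t _ => by rw [hterm t]]
  simp only [Finset.mul_sum]
  rw [Finset.sum_comm]
  refine Finset.sum_congr rfl fun n₁ _ => ?_
  rw [windowL, Finset.mul_sum, Finset.mul_sum]
  refine Finset.sum_congr rfl fun t _ => ?_
  have habs : ((‖matElem v μ n₁ n₀‖ ^ 2 : ℝ) : ℂ)
      = matElem v μ n₁ n₀ * star (matElem v μ n₁ n₀) := by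
    rw [Complex.sq_norm, RCLike.star_def, Complex.mul_conj]
  rw [habs]
  have he : Complex.exp (-(Complex.I * (ω : ℂ) * ((t : ℕ) : ℂ))) *
      (Complex.exp ((((t : ℕ) : ℝ) : ℂ) * Complex.I * (lam n₀ : ℂ)) *
        Complex.exp (((-((t : ℕ) : ℝ) : ℝ) : ℂ) * Complex.I * (lam n₁ : ℂ)))
      = Complex.exp (Complex.I * ((t : ℕ) : ℂ) * ((lam n₀ - lam n₁ - ω : ℝ) : ℂ)) := by
    rw [← Complex.exp_add, ← Complex.exp_add]
    congr 1
    push_cast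
    ring
  calc (α t / (Real.sqrt N : ℂ)) * Complex.exp (-(Complex.I * (ω : ℂ) * ((t : ℕ) : ℂ))) *
        (Complex.exp ((((t : ℕ) : ℝ) : ℂ) * Complex.I * (lam n₀ : ℂ)) *
          (Complex.exp (((-((t : ℕ) : ℝ) : ℝ) : ℂ) * Complex.I * (lam n₁ : ℂ)) *
            (matElem v μ n₁ n₀ * star (matElem v μ n₁ n₀))))
      = (matElem v μ n₁ n₀ * star (matElem v μ n₁ n₀)) * (α t / (Real.sqrt N : ℂ)) *
          (Complex.exp (-(Complex.I * (ω : ℂ) * ((t : ℕ) : ℂ))) *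
            (Complex.exp ((((t : ℕ) : ℝ) : ℂ) * Complex.I * (lam n₀ : ℂ)) *
              Complex.exp (((-((t : ℕ) : ℝ) : ℝ) : ℂ) * Complex.I * (lam n₁ : ℂ)))) := by
        ring
    _ = matElem v μ n₁ n₀ * star (matElem v μ n₁ n₀) *
          (1 / (Real.sqrt N : ℂ) * (α t *
            Complex.exp (Complex.I * ((t : ℕ) : ℂ) * ((lam n₀ - lam n₁ - ω : ℝ) : ℂ)))) := by
        rw [he]
        ring
end

section
/- For every integer D ≥ 1, matrices V^(0),…,V^(D) on ℂ^M, eigenbasis indices n₀, m ∈ {0,…,M−1}, and integers ω₁,…,ω_D, the amplitude of the GQPE circuit onto the frequency outcome (ω₁,…,ω_D) and final system eigenstate |λ_m⟩ satisfies: Σ_{t₁,…,t_D = 0}^{N−1} ( ∏_{k=1}^{D} (α_{t_k}/√N) e^{−2πi t_k ω_k / N} ) ⟨λ_m| V^(0)_I(t_D) V^(1)_I(t_{D−1}) ⋯ V^(D−1)_I(t₁) V^(D) |λ_{n₀}⟩ = Σ_{n₁,…,n_D = 0}^{M−1} V^(0)_{m n₁} ( ∏_{j=2}^{D} V^(j−1)_{n_{j−1}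 n_j} ) V^(D)_{n_D n₀} · L(λ_m − λ_{n₁} − 2π ω_D/N) · ∏_{j=2}^{D} L(λ_{n_{j−1}} − λ_{n_j} − 2π ω_{D−j+1}/N). Consequently the probability of the frequency outcome (ω₁,…,ω_D) upon measuring all registers is Σ_{m=0}^{M−1} of the squared modulus of this amplitude. -/
open Matrix Complex BigOperators

/-- The interaction-picture operator `V_I(t) = e^{iHt} V e^{-iHt}`. -/
noncomputable def iPic {M : ℕ} (H V : Matrix (Fin M) (Fin M) ℂ) (t : ℝ) :
    Matrix (Fin M) (Fin M) ℂ :=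
  timeEvo H t * V * timeEvo H (-t)

/-- The chain `(m, n₁, …, n_D)` of eigenbasis indices. -/
def chain {M D : ℕ} (m : Fin M) (n : Fin D → Fin M) : Fin (D + 1) → Fin M :=
  Fin.cons m n

attribute [local instance] Matrix.linftyOpNormedAddCommGroup Matrix.linftyOpNormedRing
  Matrix.linftyOpNormedAlgebra

lemma exp_mulVec_eigen {M : ℕ} (A : Matrix (Fin M) (Fin M) ℂ) (x : Fin M → ℂ) (c : ℂ)
    (h : A *ᵥ x = c • x) :
    NormedSpace.exp A *ᵥ x = Complex.exp c • x := by
  have hpow : ∀ n : ℕ, (A ^ n) *ᵥ x = c ^ n • x := by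
    intro n
    induction n with
    | zero => simp
    | succ n ih =>
      rw [pow_succ, ← Matrix.mulVec_mulVec, h, Matrix.mulVec_smul, ih, smul_smul, pow_succ,
        mul_comm]
  let L : Matrix (Fin M) (Fin M) ℂ →ₗ[ℂ] (Fin M → ℂ) :=
    { toFun := fun B => B *ᵥ x
      map_add' := fun B C => Matrix.add_mulVec B C x
      map_smul' := fun r B => Matrix.smul_mulVec r B x }
  let L' : Matrix (Fin M) (Fin M) ℂ →L[ℂ] (Fin M → ℂ) := LinearMap.toContinuousLinearMap L
  have hs : Summable fun n : ℕ => ((Nat.factorial n : ℂ))⁻¹ • A ^ n :=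
    NormedSpace.expSeries_summable' A
  have : NormedSpace.exp A *ᵥ x = L' (NormedSpace.exp A) := rfl
  rw [this, NormedSpace.exp_eq_tsum (𝕂 := ℂ), L'.map_tsum hs]
  have hterm : ∀ n : ℕ, L' (((Nat.factorial n : ℂ))⁻¹ • A ^ n) = (((Nat.factorial n : ℂ))⁻¹ * c ^ n) • x := by
    intro n
    show (((Nat.factorial n : ℂ))⁻¹ • A ^ n) *ᵥ x = _
    rw [Matrix.smul_mulVec, hpow, smul_smul]
  simp_rw [hterm]
  have hsc : Summable fun n : ℕ => ((Nat.factorial n : ℂ))⁻¹ * c ^ n := by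
    simpa [smul_eq_mul] using NormedSpace.expSeries_summable' (𝕂 := ℂ) c
  rw [hsc.tsum_smul_const]
  congr 1
  rw [Complex.exp_eq_exp_ℂ, NormedSpace.exp_eq_tsum (𝕂 := ℂ)]
  simp [smul_eq_mul]

section Eig
variable {M : ℕ} (H : Matrix (Fin M) (Fin M) ℂ) (hH : H.IsHermitian)
  (v : Fin M → Fin M → ℂ) (lam : Fin M → ℝ)

lemma timeEvo_mulVec_eigen (s : ℝ) (n : Fin M) (heig : H *ᵥ v n = (lam n : ℂ) • v n) :
    timeEvo H s *ᵥ v n = Complex.exp ((s : ℂ) * Complex.I * (lam n : ℂ)) • v n := by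
  apply exp_mulVec_eigen
  rw [Matrix.smul_mulVec, heig, smul_smul]

lemma timeEvo_conjTranspose (s : ℝ) (hH : H.IsHermitian) :
    (timeEvo H s)ᴴ = timeEvo H (-s) := by
  rw [timeEvo, ← Matrix.exp_conjTranspose]
  congr 1
  rw [Matrix.conjTranspose_smul, hH.eq]
  congr 1
  simp [Complex.ext_iff]

lemma matElem_iPic (W : Matrix (Fin M) (Fin M) ℂ) (t : ℝ) (a b : Fin M)
    (hH : H.IsHermitian)
    (ha : H *ᵥ v a = (lam a : ℂ) • v a) (hb : H *ᵥ v b = (lam b : ℂ) • v b) :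
    matElem v (iPic H W t) a b =
      Complex.exp (Complex.I * (t : ℂ) * ((lam a : ℂ) - (lam b : ℂ))) * matElem v W a b := by
  unfold matElem iPic
  rw [← Matrix.mulVec_mulVec, ← Matrix.mulVec_mulVec,
    timeEvo_mulVec_eigen H v lam (-t) b hb, Matrix.mulVec_smul]
  have h1 : timeEvo H t = (timeEvo H (-t))ᴴ := by
    rw [timeEvo_conjTranspose H (-t) hH, neg_neg]
  rw [Matrix.dotProduct_mulVec, h1, ← Matrix.star_mulVec,
    timeEvo_mulVec_eigen H v lam (-t) a ha, star_smul, smul_dotProduct, dotProduct_smul,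
    smul_eq_mul, smul_eq_mul, ← mul_assoc]
  congr 1
  have hstar : star (Complex.exp (((-t : ℝ) : ℂ) * Complex.I * (lam a : ℂ)))
      = Complex.exp ((t : ℂ) * Complex.I * (lam a : ℂ)) := by
    rw [RCLike.star_def, ← Complex.exp_conj]
    congr 1
    simp [Complex.ext_iff]
  rw [hstar, ← Complex.exp_add]
  congr 1
  push_cast
  ring

lemma complete {M : ℕ} (v : Fin M → Fin M → ℂ)
    (hortho : ∀ m n, star (v m) ⬝ᵥ v n = if m = n then (1 : ℂ) else 0) (i j : Fin M) :
    (∑ k, v k i * star (v k j)) = if i = j then (1 : ℂ) else 0 := by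
  let U : Matrix (Fin M) (Fin M) ℂ := Matrix.of fun i j => v j i
  have h1 : Uᴴ * U = 1 := by
    ext m n
    simpa [U, Matrix.mul_apply, Matrix.conjTranspose_apply, Matrix.one_apply, dotProduct]
      using hortho m n
  have h2 : U * Uᴴ = 1 := mul_eq_one_comm.mp h1
  have h3 := congrArg (fun A => A i j) h2
  simpa [U, Matrix.mul_apply, Matrix.conjTranspose_apply, Matrix.one_apply] using h3

lemma expand_vec {M : ℕ} (v : Fin M → Fin M → ℂ)
    (hortho : ∀ m n, star (v m) ⬝ᵥ v n = if m = n then (1 : ℂ) else 0) (w : Fin M → ℂ) :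
    w = ∑ k, (star (v k) ⬝ᵥ w) • v k := by
  funext i
  rw [Finset.sum_apply]
  simp only [Pi.smul_apply, smul_eq_mul, dotProduct, Pi.star_apply]
  calc w i = ∑ j, (if i = j then (1 : ℂ) else 0) * w j := by simp
    _ = ∑ j, (∑ k, v k i * star (v k j)) * w j := by
        refine Finset.sum_congr rfl fun j _ => ?_
        rw [complete v hortho i j]
    _ = ∑ j, ∑ k, star (v k j) * w j * v k i := by
        refine Finset.sum_congr rfl fun j _ => ?_
        rw [Finset.sum_mul]
        refine Finset.sum_congr rfl fun k _ => by ring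
    _ = ∑ k, ∑ j, star (v k j) * w j * v k i := Finset.sum_comm
    _ = ∑ k, (∑ j, star (v k j) * w j) * v k i := by
        refine Finset.sum_congr rfl fun k _ => (Finset.sum_mul _ _ _).symm

lemma dot_sum {M : ℕ} (u : Fin M → ℂ) {ι : Type*} (s : Finset ι) (f : ι → Fin M → ℂ) :
    u ⬝ᵥ (∑ k ∈ s, f k) = ∑ k ∈ s, u ⬝ᵥ f k := by
  simp only [dotProduct, Finset.sum_apply, Finset.mul_sum]
  exact Finset.sum_comm

lemma matElem_mul {M : ℕ} (v : Fin M → Fin M → ℂ)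
    (hortho : ∀ m n, star (v m) ⬝ᵥ v n = if m = n then (1 : ℂ) else 0)
    (A B : Matrix (Fin M) (Fin M) ℂ) (m n : Fin M) :
    matElem v (A * B) m n = ∑ k, matElem v A m k * matElem v B k n := by
  unfold matElem
  rw [← Matrix.mulVec_mulVec]
  have hexp : A *ᵥ (B *ᵥ v n) = ∑ k, (star (v k) ⬝ᵥ (B *ᵥ v n)) • (A *ᵥ v k) := by
    conv_lhs => rw [expand_vec v hortho (B *ᵥ v n)]
    have := map_sum (A.mulVecLin) (fun k => (star (v k) ⬝ᵥ (B *ᵥ v n)) • v k) Finset.univ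
    simpa only [_root_.map_smul, Matrix.mulVecLin_apply, Matrix.mulVec_smul] using this
  rw [hexp, dot_sum]
  refine Finset.sum_congr rfl fun k _ => ?_
  rw [dotProduct_smul, smul_eq_mul, mul_comm]

lemma matElem_chain {M : ℕ} (v : Fin M → Fin M → ℂ)
    (hortho : ∀ m n, star (v m) ⬝ᵥ v n = if m = n then (1 : ℂ) else 0) :
    ∀ (D : ℕ) (W : Fin D → Matrix (Fin M) (Fin M) ℂ) (B : Matrix (Fin M) (Fin M) ℂ)
      (m n₀ : Fin M),
    matElem v (((List.finRange D).map W).prod * B) m n₀ =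
      ∑ n : Fin D → Fin M,
        (∏ j : Fin D, matElem v (W j) (chain m n j.castSucc) (chain m n j.succ)) *
          matElem v B (chain m n (Fin.last D)) n₀ := by
  intro D
  induction D with
  | zero =>
    intro W B m n₀
    simp [chain, Finset.univ_unique]
  | succ D ih =>
    intro W B m n₀
    rw [List.finRange_succ, List.map_cons, List.map_map, List.prod_cons, mul_assoc,
      matElem_mul v hortho]
    have hsum : ∀ (g : (Fin (D + 1) → Fin M) → ℂ),
        ∑ n : Fin (D + 1) → Fin M, g n
          = ∑ k : Fin M, ∑ n' : Fin D → Fin M, g (Fin.cons k n') := by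
      intro g
      rw [← Equiv.sum_comp (Fin.consEquiv fun _ => Fin M) g, Fintype.sum_prod_type]
      rfl
    rw [hsum]
    refine Finset.sum_congr rfl fun k _ => ?_
    rw [show W ∘ Fin.succ = fun j => W j.succ from rfl, ih (fun j => W j.succ) B k n₀,
      Finset.mul_sum]
    refine Finset.sum_congr rfl fun n' _ => ?_
    have hprod : (∏ j : Fin (D + 1), matElem v (W j)
          (chain m (Fin.cons k n') j.castSucc) (chain m (Fin.cons k n') j.succ))
        = matElem v (W 0) m k *
          ∏ j : Fin D, matElem v (W j.succ) (chain k n' j.castSucc) (chain k n' j.succ) := by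
      have e1 : chain m (Fin.cons k n') ((0 : Fin (D + 1)).castSucc) = m := by simp [chain]
      have e2 : chain m (Fin.cons k n') ((0 : Fin (D + 1)).succ) = k := by simp [chain]
      have e3 : ∀ j : Fin D,
          chain m (Fin.cons k n') (j.succ.castSucc) = chain k n' j.castSucc := by
        intro j; simp [chain, ← Fin.succ_castSucc]
      have e4 : ∀ j : Fin D, chain m (Fin.cons k n') (j.succ.succ) = chain k n' j.succ := by
        intro j; simp [chain]
      rw [Fin.prod_univ_succ, e1, e2]
      congr 1
    have hlast : chain m (Fin.cons k n') (Fin.last (D + 1)) = chain k n' (Fin.last D) := by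
      simp [chain, ← Fin.succ_last]
    rw [hprod, hlast]
    ring

lemma window_sum (N : ℕ) (α : Fin N → ℂ) (Δ : ℝ) (z : ℤ) :
    (∑ s : Fin N, (α s / (Real.sqrt N : ℂ)) *
        Complex.exp (-(2 * (Real.pi : ℂ) * Complex.I * ((s : ℕ) : ℂ) * ((z : ℤ) : ℂ)) / (N : ℂ)) *
        Complex.exp (Complex.I * ((s : ℕ) : ℂ) * ((Δ : ℝ) : ℂ)))
      = windowL N α (Δ - 2 * Real.pi * ((z : ℤ) : ℝ) / N) := by
  unfold windowL
  rw [Finset.mul_sum]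
  refine Finset.sum_congr rfl fun s _ => ?_
  have hexp : Complex.exp (-(2 * (Real.pi : ℂ) * Complex.I * ((s : ℕ) : ℂ) * ((z : ℤ) : ℂ)) / (N : ℂ)) *
      Complex.exp (Complex.I * ((s : ℕ) : ℂ) * ((Δ : ℝ) : ℂ))
      = Complex.exp (Complex.I * ((s : ℕ) : ℂ) * (((Δ - 2 * Real.pi * ((z : ℤ) : ℝ) / N) : ℝ) : ℂ)) := by
    rw [← Complex.exp_add]
    congr 1
    push_cast
    ring
  rw [mul_assoc, hexp]
  field_simp

/-- GQPE amplitude and measurement probability underlying the complete-square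
simplification: the amplitude of the GQPE circuit onto the frequency outcome
`(ω₁,…,ω_D)` and final system eigenstate `|λ_m⟩` is
`Σ_{n₁,…,n_D} V^(0)_{m n₁} (∏_{j=2}^D V^(j-1)_{n_{j-1} n_j}) V^(D)_{n_D n₀}
  · L(λ_m - λ_{n₁} - 2πω_D/N) · ∏_{j=2}^D L(λ_{n_{j-1}} - λ_{n_j} - 2πω_{D-j+1}/N)`,
and the probability of the frequency outcome upon measuring all registers is the sum
over `m` of the squared modulus of this amplitude. Here, for `j : Fin D`, `t j`
encodes `t_{j+1}`, `ω j` encodes `ω_{j+1}`, and `chain m n : Fin (D+1) → Fin M`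
encodes `(m, n₁, …, n_D)` (so that the `j = 1` window/matrix-element factor is merged
into the product over `j`). -/
theorem gqpe_amplitude_and_probability
    (M N D : ℕ) (hD : 1 ≤ D) (hN : 1 ≤ N)
    (H : Matrix (Fin M) (Fin M) ℂ) (hH : H.IsHermitian)
    (v : Fin M → Fin M → ℂ) (lam : Fin M → ℝ)
    (hortho : ∀ m n, star (v m) ⬝ᵥ v n = if m = n then (1 : ℂ) else 0)
    (heig : ∀ n, H *ᵥ v n = (lam n : ℂ) • v n)
    (V : Fin (D + 1) → Matrix (Fin M) (Fin M) ℂ)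
    (α : Fin N → ℂ) (n₀ : Fin M) (ω : Fin D → ℤ)
    (amp : Fin M → ℂ)
    (hamp : ∀ m : Fin M, amp m =
      ∑ t : Fin D → Fin N,
        (∏ k : Fin D, (α (t k) / (Real.sqrt N : ℂ)) *
          Complex.exp (-(2 * (Real.pi : ℂ) * Complex.I * ((t k : ℕ) : ℂ) *
            ((ω k : ℤ) : ℂ)) / (N : ℂ))) *
        (star (v m) ⬝ᵥ
          ((((List.finRange D).map
              (fun j => iPic H (V j.castSucc) ((t j.rev : ℕ) : ℝ))).prod *
            V (Fin.last D)) *ᵥ v n₀))) :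
    (∀ m : Fin M, amp m
      = ∑ n : Fin D → Fin M,
          matElem v (V (Fin.last D)) (chain m n (Fin.last D)) n₀ *
          ∏ j : Fin D,
            matElem v (V j.castSucc) (chain m n j.castSucc) (chain m n j.succ) *
            windowL N α (lam (chain m n j.castSucc) - lam (chain m n j.succ)
              - 2 * Real.pi * ((ω j.rev : ℤ) : ℝ) / N)) ∧
    (∑ m : Fin M, ‖amp m‖ ^ 2
      = ∑ m : Fin M, ‖
          (∑ n : Fin D → Fin M,
            matElem v (V (Fin.last D)) (chain m n (Fin.last D)) n₀ *
            ∏ j : Fin D,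
              matElem v (V j.castSucc) (chain m n j.castSucc) (chain m n j.succ) *
              windowL N α (lam (chain m n j.castSucc) - lam (chain m n j.succ)
                - 2 * Real.pi * ((ω j.rev : ℤ) : ℝ) / N))‖ ^ 2) := by

  have key : ∀ m : Fin M, amp m
      = ∑ n : Fin D → Fin M,
          matElem v (V (Fin.last D)) (chain m n (Fin.last D)) n₀ *
          ∏ j : Fin D,
            matElem v (V j.castSucc) (chain m n j.castSucc) (chain m n j.succ) *
            windowL N α (lam (chain m n j.castSucc) - lam (chain m n j.succ)
              - 2 * Real.pi * ((ω j.rev : ℤ) : ℝ) / N) := by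
    intro m
    rw [hamp m]
    have hchain : ∀ t : Fin D → Fin N,
        (star (v m) ⬝ᵥ
          ((((List.finRange D).map
              (fun j => iPic H (V j.castSucc) ((t j.rev : ℕ) : ℝ))).prod *
            V (Fin.last D)) *ᵥ v n₀))
        = ∑ n : Fin D → Fin M,
            (∏ j : Fin D, matElem v (iPic H (V j.castSucc) ((t j.rev : ℕ) : ℝ))
              (chain m n j.castSucc) (chain m n j.succ)) *
            matElem v (V (Fin.last D)) (chain m n (Fin.last D)) n₀ :=
      fun t => matElem_chain v hortho D _ _ m n₀
    simp_rw [hchain]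
    have hip : ∀ (W : Matrix (Fin M) (Fin M) ℂ) (s : ℝ) (a b : Fin M),
        matElem v (iPic H W s) a b
          = Complex.exp (Complex.I * (s : ℂ) * ((lam a : ℂ) - (lam b : ℂ))) * matElem v W a b :=
      fun W s a b => matElem_iPic H v lam W s a b hH (heig a) (heig b)
    simp_rw [hip, Complex.ofReal_natCast, ← Complex.ofReal_sub, Finset.mul_sum]
    rw [Finset.sum_comm]
    refine Finset.sum_congr rfl fun n _ => ?_
    have h1 : ∀ t : Fin D → Fin N,
        (∏ j : Fin D, Complex.exp (Complex.I * ((t j.rev : ℕ) : ℂ) *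
            (((lam (chain m n j.castSucc) - lam (chain m n j.succ) : ℝ)) : ℂ)))
          = ∏ j : Fin D, Complex.exp (Complex.I * ((t j : ℕ) : ℂ) *
            (((lam (chain m n j.rev.castSucc) - lam (chain m n j.rev.succ) : ℝ)) : ℂ)) :=
      fun t => Fintype.prod_equiv Fin.revPerm _ _ (fun j => by simp [Fin.rev_rev])
    have h2 : ∀ t : Fin D → Fin N,
        (∏ k : Fin D, α (t k) / (Real.sqrt N : ℂ) *
            Complex.exp (-(2 * (Real.pi : ℂ) * Complex.I * ((t k : ℕ) : ℂ) *
              ((ω k : ℤ) : ℂ)) / (N : ℂ))) *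
          ((∏ j : Fin D, Complex.exp (Complex.I * ((t j.rev : ℕ) : ℂ) *
              (((lam (chain m n j.castSucc) - lam (chain m n j.succ) : ℝ)) : ℂ)) *
              matElem v (V j.castSucc) (chain m n j.castSucc) (chain m n j.succ)) *
            matElem v (V (Fin.last D)) (chain m n (Fin.last D)) n₀)
        = (matElem v (V (Fin.last D)) (chain m n (Fin.last D)) n₀ *
            ∏ j : Fin D, matElem v (V j.castSucc) (chain m n j.castSucc) (chain m n j.succ)) *
          ∏ j : Fin D, (α (t j) / (Real.sqrt N : ℂ) *
            Complex.exp (-(2 * (Real.pi : ℂ) * Complex.I * ((t j : ℕ) : ℂ) *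
              ((ω j : ℤ) : ℂ)) / (N : ℂ)) *
            Complex.exp (Complex.I * ((t j : ℕ) : ℂ) *
              (((lam (chain m n j.rev.castSucc) - lam (chain m n j.rev.succ) : ℝ)) : ℂ))) := by
      intro t
      simp only [Finset.prod_mul_distrib]
      rw [h1 t]
      ring
    simp_rw [h2]
    rw [← Finset.mul_sum, ← Fintype.prod_sum (fun (j : Fin D) (s : Fin N) =>
      α s / (Real.sqrt N : ℂ) *
        Complex.exp (-(2 * (Real.pi : ℂ) * Complex.I * ((s : ℕ) : ℂ) *
          ((ω j : ℤ) : ℂ)) / (N : ℂ)) *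
        Complex.exp (Complex.I * ((s : ℕ) : ℂ) *
          (((lam (chain m n j.rev.castSucc) - lam (chain m n j.rev.succ) : ℝ)) : ℂ)))]
    have h3 : ∀ j : Fin D,
        (∑ s : Fin N, α s / (Real.sqrt N : ℂ) *
            Complex.exp (-(2 * (Real.pi : ℂ) * Complex.I * ((s : ℕ) : ℂ) *
              ((ω j : ℤ) : ℂ)) / (N : ℂ)) *
            Complex.exp (Complex.I * ((s : ℕ) : ℂ) *
              (((lam (chain m n j.rev.castSucc) - lam (chain m n j.rev.succ) : ℝ)) : ℂ)))
        = windowL N α ((lam (chain m n j.rev.castSucc) - lam (chain m n j.rev.succ))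
            - 2 * Real.pi * ((ω j : ℤ) : ℝ) / N) :=
      fun j => window_sum N α _ (ω j)
    simp_rw [h3]
    have h4 : (∏ j : Fin D, windowL N α ((lam (chain m n j.rev.castSucc)
            - lam (chain m n j.rev.succ)) - 2 * Real.pi * ((ω j : ℤ) : ℝ) / N))
        = ∏ j : Fin D, windowL N α ((lam (chain m n j.castSucc) - lam (chain m n j.succ))
            - 2 * Real.pi * ((ω j.rev : ℤ) : ℝ) / N) :=
      Fintype.prod_equiv Fin.revPerm _ _ (fun j => by simp [Fin.rev_rev])
    rw [h4, Finset.prod_mul_distrib]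
    ring
  exact ⟨key, Finset.sum_congr rfl fun m _ => by rw [key m]⟩
end Eig
end

section
/- Let μ be a Hermitian M×M complex matrix, let α_0,…,α_{N−1} and β_0,…,β_{N−1} be two sets of window coefficients with associated window functions L_a(ω) := (1/√N) Σ_k α_k e^{ikω} and L_b(ω) := (1/√N) Σ_k β_k e^{ikω}. Then for all eigenbasis indices n₀, m ∈ {0,…,M−1} and all integers ω₁, ω₂, the amplitude of the resonant Raman GQPE circuit satisfies: Σ_{t₁,t₂=0}^{N−1} (α_{t₁} β_{t₂} / N) e^{−2πi(ω₁ t₁ + ω₂ t₂)/N} ⟨λ_m| e^{−iHt₁} μ e^{−iHt₂} μ |λ_{n₀}⟩ = Σ_{n₁=0}^{M−1} μ_{m n₁} μ_{n₁ n₀} · L_a(−λ_m − 2πω₁/N) · L_b(−λ_{n₁} − 2πω₂/N). -/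
open Matrix Complex BigOperators

lemma aux_timeEvo_mulVec {M : ℕ}
    (H : Matrix (Fin M) (Fin M) ℂ)
    (v : Fin M → Fin M → ℂ) (lam : Fin M → ℝ)
    (hortho : ∀ m n, star (v m) ⬝ᵥ v n = if m = n then (1 : ℂ) else 0)
    (heig : ∀ n, H *ᵥ v n = (lam n : ℂ) • v n) (s : ℝ) (n : Fin M) :
    timeEvo H s *ᵥ v n
      = Complex.exp ((s : ℂ) * Complex.I * (lam n : ℂ)) • v n := by
  show NormedSpace.exp (((s : ℂ) * Complex.I) • H) *ᵥ v n = _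
  set c : ℂ := (s : ℂ) * Complex.I with hc
  set V : Matrix (Fin M) (Fin M) ℂ := Matrix.of fun i j => v j i with hVdef
  have hVhV : Vᴴ * V = 1 := by
    ext a b
    simpa [Matrix.mul_apply, Matrix.conjTranspose_apply, Matrix.one_apply, dotProduct, V]
      using hortho a b
  have hVVh : V * Vᴴ = 1 := mul_eq_one_comm.mp hVhV
  have hinv : V⁻¹ = Vᴴ := Matrix.inv_eq_left_inv hVhV
  have hunit : IsUnit V := ⟨⟨V, Vᴴ, hVVh, hVhV⟩, rfl⟩
  set D : Matrix (Fin M) (Fin M) ℂ := Matrix.diagonal (fun k => (lam k : ℂ)) with hD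
  have hHV : H * V = V * D := by
    ext i k
    have h := congrFun (heig k) i
    simp only [Matrix.mulVec, dotProduct, Pi.smul_apply, smul_eq_mul] at h
    simp [Matrix.mul_apply, Matrix.mul_diagonal, V, D, Matrix.diagonal, h, mul_comm]
  have hH' : H = V * D * Vᴴ := by
    calc H = H * (V * Vᴴ) := by rw [hVVh, mul_one]
    _ = H * V * Vᴴ := by rw [mul_assoc]
    _ = V * D * Vᴴ := by rw [hHV]
  have hsmul : c • H = V * (c • D) * Vᴴ := by
    rw [hH', ← smul_mul_assoc, ← mul_smul_comm]
  have hexp : NormedSpace.exp (c • H)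
      = V * Matrix.diagonal (fun k => Complex.exp (c * (lam k : ℂ))) * Vᴴ := by
    rw [hsmul, ← hinv, Matrix.exp_conj V _ hunit, hinv]
    congr 2
    rw [hD, ← Matrix.diagonal_smul, Matrix.exp_diagonal]
    congr 1
    funext k
    rw [Pi.exp_def]
    simp [← Complex.exp_eq_exp_ℂ, smul_eq_mul]
  rw [hexp]
  have hVn : Vᴴ *ᵥ v n = Pi.single n 1 := by
    funext a
    have := hortho a n
    simp only [dotProduct, Pi.star_apply, Complex.star_def] at this
    simp [Matrix.mulVec, dotProduct, Matrix.conjTranspose_apply, V, this, Pi.single_apply]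
  rw [← Matrix.mulVec_mulVec, hVn, Matrix.mulVec_single]
  funext i
  simp [Matrix.mul_diagonal, V, mul_comm]

lemma aux_resolve {M : ℕ} (v : Fin M → Fin M → ℂ)
    (hortho : ∀ m n, star (v m) ⬝ᵥ v n = if m = n then (1 : ℂ) else 0)
    (x : Fin M → ℂ) :
    x = ∑ k : Fin M, (star (v k) ⬝ᵥ x) • v k := by
  set V : Matrix (Fin M) (Fin M) ℂ := Matrix.of fun i j => v j i with hVdef
  have hVhV : Vᴴ * V = 1 := by
    ext a b
    simpa [Matrix.mul_apply, Matrix.conjTranspose_apply, Matrix.one_apply, dotProduct, V]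
      using hortho a b
  have hVVh : V * Vᴴ = 1 := mul_eq_one_comm.mp hVhV
  have h1 : V *ᵥ (Vᴴ *ᵥ x) = x := by
    rw [Matrix.mulVec_mulVec, hVVh, Matrix.one_mulVec]
  funext i
  rw [← congrFun h1 i]
  simp only [Matrix.mulVec, dotProduct, Matrix.conjTranspose_apply, Finset.sum_apply,
    Pi.smul_apply, smul_eq_mul, Matrix.of_apply, V, Pi.star_apply]
  refine Finset.sum_congr rfl fun k _ => ?_
  simp [Finset.mul_sum, Finset.sum_mul, mul_comm, mul_left_comm]

/-- Amplitude of the resonant Raman GQPE circuit of Fig. 3: with two window registers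
(coefficients `α`, `β` and window functions `L_a`, `L_b`) controlling multiplexed time
evolutions interleaved with two applications of the Hermitian dipole operator `μ`,
`Σ_{t₁,t₂} (α_{t₁}β_{t₂}/N) e^{-2πi(ω₁t₁+ω₂t₂)/N} ⟨λ_m|e^{-iHt₁} μ e^{-iHt₂} μ|λ_{n₀}⟩
  = Σ_{n₁} μ_{m n₁} μ_{n₁ n₀} L_a(-λ_m - 2πω₁/N) L_b(-λ_{n₁} - 2πω₂/N)`. -/
theorem resonant_raman_gqpe_amplitude
    (M N : ℕ) (hN : 1 ≤ N)
    (H : Matrix (Fin M) (Fin M) ℂ) (hH : H.IsHermitian)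
    (v : Fin M → Fin M → ℂ) (lam : Fin M → ℝ)
    (hortho : ∀ m n, star (v m) ⬝ᵥ v n = if m = n then (1 : ℂ) else 0)
    (heig : ∀ n, H *ᵥ v n = (lam n : ℂ) • v n)
    (μ : Matrix (Fin M) (Fin M) ℂ) (hμ : μ.IsHermitian)
    (α β : Fin N → ℂ) (n₀ m : Fin M) (ω₁ ω₂ : ℤ) :
    (∑ t₁ : Fin N, ∑ t₂ : Fin N,
        (α t₁ * β t₂ / (N : ℂ)) *
        Complex.exp (-(2 * (Real.pi : ℂ) * Complex.I *
          ((ω₁ : ℂ) * ((t₁ : ℕ) : ℂ) + (ω₂ : ℂ) * ((t₂ : ℕ) : ℂ))) / (N : ℂ)) *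
        (star (v m) ⬝ᵥ
          ((timeEvo H (-((t₁ : ℕ) : ℝ)) * μ * timeEvo H (-((t₂ : ℕ) : ℝ)) * μ) *ᵥ
            v n₀)))
      = ∑ n₁ : Fin M,
          matElem v μ m n₁ * matElem v μ n₁ n₀ *
            windowL N α (-(lam m) - 2 * Real.pi * (ω₁ : ℝ) / N) *
            windowL N β (-(lam n₁) - 2 * Real.pi * (ω₂ : ℝ) / N) := by
  have hTE : ∀ (s : ℝ) (p : Fin M),
      timeEvo H s *ᵥ v p = Complex.exp ((s : ℂ) * Complex.I * (lam p : ℂ)) • v p :=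
    fun s p => aux_timeEvo_mulVec H v lam hortho heig s p
  have hμv : ∀ p : Fin M, μ *ᵥ v p = ∑ k : Fin M, matElem v μ k p • v k :=
    fun p => aux_resolve v hortho (μ *ᵥ v p)
  have hmulsum : ∀ (B : Matrix (Fin M) (Fin M) ℂ) (f : Fin M → Fin M → ℂ),
      B *ᵥ (∑ k : Fin M, f k) = ∑ k : Fin M, B *ᵥ f k := by
    intro B f
    funext i
    simp only [Matrix.mulVec, dotProduct, Finset.sum_apply, Finset.mul_sum]
    exact Finset.sum_comm
  have hdot : ∀ (f : Fin M → ℂ),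
      star (v m) ⬝ᵥ (∑ j : Fin M, f j • v j) = f m := by
    intro f
    have : star (v m) ⬝ᵥ (∑ j : Fin M, f j • v j)
        = ∑ j : Fin M, f j * (star (v m) ⬝ᵥ v j) := by
      simp only [dotProduct, Finset.sum_apply, Pi.smul_apply, smul_eq_mul, Finset.mul_sum]
      rw [Finset.sum_comm]
      exact Finset.sum_congr rfl fun j _ => Finset.sum_congr rfl fun i _ => by ring
    rw [this]
    simp [hortho, Finset.sum_ite_eq]
  have hkey : ∀ t₁ t₂ : Fin N,
      star (v m) ⬝ᵥ
        ((timeEvo H (-((t₁ : ℕ) : ℝ)) * μ * timeEvo H (-((t₂ : ℕ) : ℝ)) * μ) *ᵥ v n₀)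
      = ∑ n₁ : Fin M, matElem v μ m n₁ * matElem v μ n₁ n₀ *
          Complex.exp (((-((t₁ : ℕ) : ℝ) : ℝ) : ℂ) * Complex.I * (lam m : ℂ)) *
          Complex.exp (((-((t₂ : ℕ) : ℝ) : ℝ) : ℂ) * Complex.I * (lam n₁ : ℂ)) := by
    intro t₁ t₂
    rw [← Matrix.mulVec_mulVec, ← Matrix.mulVec_mulVec, ← Matrix.mulVec_mulVec, hμv n₀]
    simp only [hmulsum, Matrix.mulVec_smul, hTE, hμv, smul_smul, Finset.smul_sum]
    rw [Finset.sum_comm]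
    simp only [← Finset.sum_smul]
    rw [hdot]
    refine Finset.sum_congr rfl fun k _ => ?_
    ring
  simp only [hkey]
  have hN0 : (N : ℂ) ≠ 0 := Nat.cast_ne_zero.mpr (by omega)
  have hsq : ((Real.sqrt N : ℝ) : ℂ) * ((Real.sqrt N : ℝ) : ℂ) = (N : ℂ) := by
    rw [← Complex.ofReal_mul, Real.mul_self_sqrt (Nat.cast_nonneg N)]
    norm_cast
  have hsq0 : ((Real.sqrt N : ℝ) : ℂ) ≠ 0 := by
    intro h
    rw [h, zero_mul] at hsq
    exact hN0 hsq.symm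
  unfold windowL
  simp only [Finset.mul_sum, Finset.sum_mul]
  rw [show (∑ t₁ : Fin N, ∑ t₂ : Fin N, ∑ n₁ : Fin M, _) = _ from
    Finset.sum_congr rfl fun t₁ _ => Finset.sum_comm, Finset.sum_comm]
  refine Finset.sum_congr rfl fun n₁ _ => ?_
  conv_rhs => rw [Finset.sum_comm]
  refine Finset.sum_congr rfl fun t₁ _ => ?_
  refine Finset.sum_congr rfl fun t₂ _ => ?_
  rw [show Complex.exp (-(2 * (Real.pi : ℂ) * Complex.I *
        ((ω₁ : ℂ) * ((t₁ : ℕ) : ℂ) + (ω₂ : ℂ) * ((t₂ : ℕ) : ℂ))) / (N : ℂ))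
      = Complex.exp (-(2 * (Real.pi : ℂ) * Complex.I * ((ω₁ : ℂ) * ((t₁ : ℕ) : ℂ))) / (N : ℂ))
        * Complex.exp (-(2 * (Real.pi : ℂ) * Complex.I * ((ω₂ : ℂ) * ((t₂ : ℕ) : ℂ))) / (N : ℂ))
      from by rw [← Complex.exp_add]; congr 1; ring]
  rw [show Complex.I * ((t₁ : ℕ) : ℂ) * ((-(lam m) - 2 * Real.pi * (ω₁ : ℝ) / N : ℝ) : ℂ)
      = ((-((t₁ : ℕ) : ℝ) : ℝ) : ℂ) * Complex.I * (lam m : ℂ)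
        + -(2 * (Real.pi : ℂ) * Complex.I * ((ω₁ : ℂ) * ((t₁ : ℕ) : ℂ))) / (N : ℂ)
      from by push_cast; ring]
  rw [show Complex.I * ((t₂ : ℕ) : ℂ) * ((-(lam n₁) - 2 * Real.pi * (ω₂ : ℝ) / N : ℝ) : ℂ)
      = ((-((t₂ : ℕ) : ℝ) : ℝ) : ℂ) * Complex.I * (lam n₁ : ℂ)
        + -(2 * (Real.pi : ℂ) * Complex.I * ((ω₂ : ℂ) * ((t₂ : ℕ) : ℂ))) / (N : ℂ)
      from by push_cast; ring]
  rw [Complex.exp_add, Complex.exp_add]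
  have h1N : ((N : ℂ))⁻¹
      = (1 / ((Real.sqrt N : ℝ) : ℂ)) * (1 / ((Real.sqrt N : ℝ) : ℂ)) := by
    rw [← hsq]; ring
  rw [div_eq_mul_inv, h1N]
  ring
end
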